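/- Let F(w) = H(w) + λG(w) where H : ℝ^d → ℝ is convex and differentiable, λ > 0, and G(w) = Σ_i (e^{w_i} + e^{−w_i} − 2 − w_i²). Then for every minimizer w* of F (with ∇F(w*) = 0), F(w) − F(w*) ≥ (λ/(36d))·‖w − w*‖⁴ for all w ∈ ℝ^d; equivalently, ‖w − w*‖² ≤ 6√(d/λ)·√(F(w) − F(w*)). -/

import Mathlib

open Real

private lemma aux_nonneg_of_deriv {f : ℝ → ℝ} (hf : Differentiable ℝ f) (y : ℝ) (h0 : f y = 0)
    (hd : ∀ x, 0 ≤ (x - y) * deriv f x) : ∀ x, 0 ≤ f x := by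
  intro x
  rcases le_total y x with h | h
  · have hm : MonotoneOn f (Set.Ici y) := by
      refine monotoneOn_of_deriv_nonneg (convex_Ici y) hf.continuous.continuousOn
        hf.differentiableOn ?_
      intro z hz
      rw [interior_Ici] at hz
      have := hd z
      nlinarith [hz.out]
    have := hm (Set.self_mem_Ici) (Set.mem_Ici.mpr h) h
    linarith [h0 ▸ this]
  · have hm : AntitoneOn f (Set.Iic y) := by
      refine antitoneOn_of_deriv_nonpos (convex_Iic y) hf.continuous.continuousOn
        hf.differentiableOn ?_
      intro z hz
      rw [interior_Iic] at hz
      have := hd z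
      nlinarith [hz.out]
    have := hm (Set.mem_Iic.mpr h) (Set.self_mem_Iic) h
    linarith [h0 ▸ this]

private lemma hd_sinh (x : ℝ) : HasDerivAt (fun x => exp x - exp (-x) - 2 * x)
    (exp x + exp (-x) - 2) x := by
  have h1 : HasDerivAt (fun x : ℝ => exp (-x)) (-exp (-x)) x := by
    simpa [Function.comp_def] using (Real.hasDerivAt_exp (-x)).comp x ((hasDerivAt_id x).neg)
  have := ((Real.hasDerivAt_exp x).sub h1).sub ((hasDerivAt_id x).const_mul 2)
  exact this.congr_deriv (by ring)

private lemma cosh_ge (x : ℝ) : 0 ≤ exp x + exp (-x) - 2 := by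
  nlinarith [Real.add_one_le_exp x, Real.add_one_le_exp (-x)]

private lemma sinh_sign (x : ℝ) : 0 ≤ x * (exp x - exp (-x) - 2 * x) := by
  have hm : Monotone (fun x => exp x - exp (-x) - 2 * x) := by
    refine monotone_of_deriv_nonneg (fun z => (hd_sinh z).differentiableAt) (fun z => ?_)
    rw [(hd_sinh z).deriv]; exact cosh_ge z
  rcases le_total 0 x with h | h
  · have := hm h; simp at this; nlinarith
  · have := hm h; simp at this; nlinarith

private lemma u_nonneg (x : ℝ) : 0 ≤ exp x + exp (-x) - 2 - x ^ 2 := by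
  have hd : ∀ z : ℝ, HasDerivAt (fun x => exp x + exp (-x) - 2 - x ^ 2)
      (exp z - exp (-z) - 2 * z) z := by
    intro z
    have h1 : HasDerivAt (fun x : ℝ => exp (-x)) (-exp (-z)) z := by
      simpa [Function.comp_def] using (Real.hasDerivAt_exp (-z)).comp z ((hasDerivAt_id z).neg)
    have := (((Real.hasDerivAt_exp z).add h1).sub (hasDerivAt_const z 2)).sub
      (hasDerivAt_pow 2 z)
    exact this.congr_deriv (by ring)
  refine aux_nonneg_of_deriv (fun z => (hd z).differentiableAt) 0 (by norm_num) (fun z => ?_) x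
  rw [(hd z).deriv]
  simpa using sinh_sign z

private lemma chi_mono : Monotone (fun x : ℝ => exp x - exp (-x) - 2 * x - x ^ 3 / 3) := by
  have hd : ∀ z : ℝ, HasDerivAt (fun x : ℝ => exp x - exp (-x) - 2 * x - x ^ 3 / 3)
      (exp z + exp (-z) - 2 - z ^ 2) z := by
    intro z
    have := (hd_sinh z).sub ((hasDerivAt_pow 3 z).div_const 3)
    exact this.congr_deriv (by ring)
  refine monotone_of_deriv_nonneg (fun z => (hd z).differentiableAt) (fun z => ?_)
  rw [(hd z).deriv]; exact u_nonneg z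

/-- Per-coordinate Bregman bound. -/
private lemma key_coord (y x : ℝ) :
    (x - y) ^ 4 / 36 ≤ (exp x + exp (-x) - 2 - x ^ 2) - (exp y + exp (-y) - 2 - y ^ 2)
      - (exp y - exp (-y) - 2 * y) * (x - y) := by
  set g : ℝ → ℝ := fun x => (exp x + exp (-x) - x ^ 2) - (exp y + exp (-y) - y ^ 2)
      - (exp y - exp (-y) - 2 * y) * (x - y) - ((x ^ 4 - y ^ 4) / 12 - y ^ 3 * (x - y) / 3)
    with hg
  have hd : ∀ z : ℝ, HasDerivAt g
      ((exp z - exp (-z) - 2 * z - z ^ 3 / 3) - (exp y - exp (-y) - 2 * y - y ^ 3 / 3)) z := by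
    intro z
    have h1 : HasDerivAt (fun x : ℝ => exp (-x)) (-exp (-z)) z := by
      simpa [Function.comp_def] using (Real.hasDerivAt_exp (-z)).comp z ((hasDerivAt_id z).neg)
    have h2 : HasDerivAt (fun x : ℝ => exp x + exp (-x) - x ^ 2)
        (exp z + (-exp (-z)) - 2 * z ^ 1) z :=
      ((Real.hasDerivAt_exp z).add h1).sub (by simpa using hasDerivAt_pow 2 z)
    have h3 : HasDerivAt (fun x : ℝ => (exp y - exp (-y) - 2 * y) * (x - y))
        (exp y - exp (-y) - 2 * y) z := by
      simpa using (((hasDerivAt_id z).sub_const y).const_mul (exp y - exp (-y) - 2 * y))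
    have h4 : HasDerivAt (fun x : ℝ => (x ^ 4 - y ^ 4) / 12 - y ^ 3 * (x - y) / 3)
        ((4 * z ^ 3) / 12 - y ^ 3 / 3) z := by
      have := ((((hasDerivAt_pow 4 z).sub_const (y ^ 4)).div_const 12).sub
        ((((hasDerivAt_id z).sub_const y).const_mul (y ^ 3)).div_const 3))
      exact this.congr_deriv (by ring)
    have := ((h2.sub_const (exp y + exp (-y) - y ^ 2)).sub h3).sub h4
    exact this.congr_deriv (by ring)
  have hgnn : 0 ≤ g x := by
    refine aux_nonneg_of_deriv (fun z => (hd z).differentiableAt) y (by simp [hg])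
      (fun z => ?_) x
    rw [(hd z).deriv]
    rcases le_total y z with h | h
    · have := chi_mono h; exact mul_nonneg (by linarith) (by linarith [this])
    · have := chi_mono h; nlinarith [this]
  rw [hg] at hgnn
  nlinarith [sq_nonneg ((x - y) * (x + 2 * y)), hgnn]

set_option maxHeartbeats 1000000 in
/-- For `F = H + λG` with `H` convex differentiable, `λ > 0`, and
`G(w) = Σᵢ (e^{wᵢ} + e^{−wᵢ} − 2 − wᵢ²)`: every `w*` with `∇F(w*) = 0` satisfies
`F(w) − F(w*) ≥ (λ/(36d))‖w − w*‖⁴` for all `w`; equivalently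
`‖w − w*‖² ≤ 6√(d/λ)·√(F(w) − F(w*))`. -/
theorem stmt18 (d : ℕ) (lam : ℝ) (hlam : 0 < lam)
    (H : EuclideanSpace ℝ (Fin d) → ℝ)
    (hHconv : ConvexOn ℝ Set.univ H) (hHdiff : Differentiable ℝ H)
    (G F : EuclideanSpace ℝ (Fin d) → ℝ)
    (hG : G = fun w => ∑ i, (Real.exp (w i) + Real.exp (-(w i)) - 2 - (w i) ^ 2))
    (hF : F = fun w => H w + lam * G w)
    (wstar : EuclideanSpace ℝ (Fin d)) (hstar : gradient F wstar = 0) :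
    ∀ w : EuclideanSpace ℝ (Fin d),
      (lam / (36 * d)) * ‖w - wstar‖ ^ 4 ≤ F w - F wstar ∧
      ‖w - wstar‖ ^ 2 ≤ 6 * Real.sqrt (d / lam) * Real.sqrt (F w - F wstar) := by
  intro w
  classical
  rcases Nat.eq_zero_or_pos d with hd0 | hdpos
  · subst hd0
    have hw : w = wstar := PiLp.ext fun i => Fin.elim0 i
    subst hw
    constructor
    · simp
    · simp
  -- main case
  have hd' : (0:ℝ) < (d:ℝ) := by exact_mod_cast hdpos
  have hdne : (d:ℝ) ≠ 0 := ne_of_gt hd'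
  have hlamne : lam ≠ 0 := ne_of_gt hlam
  set δ := w - wstar with hδdef
  -- derivative of each coordinate function
  have hdφ : ∀ z : ℝ, HasDerivAt (fun x : ℝ => exp x + exp (-x) - 2 - x ^ 2)
      (exp z - exp (-z) - 2 * z) z := by
    intro z
    have h1 : HasDerivAt (fun x : ℝ => exp (-x)) (-exp (-z)) z := by
      simpa [Function.comp_def] using (Real.hasDerivAt_exp (-z)).comp z ((hasDerivAt_id z).neg)
    have := (((Real.hasDerivAt_exp z).add h1).sub (hasDerivAt_const z 2)).sub
      (hasDerivAt_pow 2 z)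
    exact this.congr_deriv (by ring)
  set LG : EuclideanSpace ℝ (Fin d) →L[ℝ] ℝ :=
    ∑ i, (exp (wstar i) - exp (-(wstar i)) - 2 * wstar i) • EuclideanSpace.proj i with hLGdef
  have hLG : HasFDerivAt G LG wstar := by
    rw [hG, hLGdef]
    refine HasFDerivAt.fun_sum (fun i _ => ?_)
    have hproj : HasFDerivAt (fun w : EuclideanSpace ℝ (Fin d) => w i)
        ((EuclideanSpace.proj i : EuclideanSpace ℝ (Fin d) →L[ℝ] ℝ)) wstar := by
      have h := (EuclideanSpace.proj i : EuclideanSpace ℝ (Fin d) →L[ℝ] ℝ).hasFDerivAt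
        (x := wstar)
      exact h.congr_of_eventuallyEq (Filter.Eventually.of_forall fun v => by simp)
    exact (hdφ (wstar i)).comp_hasFDerivAt wstar hproj
  have hLGapp : ∀ v : EuclideanSpace ℝ (Fin d),
      LG v = ∑ i, (exp (wstar i) - exp (-(wstar i)) - 2 * wstar i) * v i := by
    intro v
    rw [hLGdef]
    simp [ContinuousLinearMap.sum_apply]
  -- fderiv F = 0 at wstar
  have hf0 : fderiv ℝ F wstar = 0 := by
    have h1 : (InnerProductSpace.toDual ℝ (EuclideanSpace ℝ (Fin d))).symm
        (fderiv ℝ F wstar) = 0 := hstar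
    have := congrArg (InnerProductSpace.toDual ℝ (EuclideanSpace ℝ (Fin d))) h1
    simpa using this
  have hFd : HasFDerivAt F (fderiv ℝ H wstar + lam • LG) wstar := by
    rw [hF]
    exact (hHdiff wstar).hasFDerivAt.add (hLG.const_mul lam)
  have hsum0 : fderiv ℝ H wstar + lam • LG = 0 := by rw [← hFd.fderiv]; exact hf0
  have happ : (fderiv ℝ H wstar) δ = -(lam * LG δ) := by
    have := congrArg (fun L : EuclideanSpace ℝ (Fin d) →L[ℝ] ℝ => L δ) hsum0
    simp only [ContinuousLinearMap.add_apply, ContinuousLinearMap.coe_smul',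
      Pi.smul_apply, smul_eq_mul, ContinuousLinearMap.zero_apply] at this
    linarith
  -- convexity of H
  have hconv : (fderiv ℝ H wstar) δ ≤ H w - H wstar := by
    set q : ℝ → ℝ := fun s => H (wstar + s • δ) with hqdef
    have hq : ConvexOn ℝ Set.univ q := by
      have h := hHconv.comp_affineMap (AffineMap.lineMap wstar w)
      rw [Set.preimage_univ] at h
      have : q = H ∘ (AffineMap.lineMap wstar w) := by
        funext s
        simp only [hqdef, Function.comp_apply, AffineMap.lineMap_apply_module]
        congr 1
        rw [hδdef]
        module
      rwa [this]
    have hline : HasDerivAt (fun s : ℝ => wstar + s • δ) δ 0 := by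
      simpa using ((hasDerivAt_id (0:ℝ)).smul_const δ).const_add wstar
    have hq0 : HasDerivAt q ((fderiv ℝ H wstar) δ) 0 := by
      have h := (hHdiff (wstar + (0:ℝ) • δ)).hasFDerivAt.comp_hasDerivAt 0 hline
      simpa [Function.comp_def] using h
    have hs := hq.le_slope_of_hasDerivAt (Set.mem_univ 0) (Set.mem_univ 1) one_pos hq0
    rw [slope_def_field] at hs
    have hq1 : q 1 = H w := by
      simp only [hqdef, one_smul, hδdef]
      congr 1
      abel
    have hq0' : q 0 = H wstar := by simp [hqdef]
    rw [hq1, hq0'] at hs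
    linarith [hs]
  -- Bregman bound for G
  have hkey : ∑ i, (δ i) ^ 4 / 36 ≤ G w - G wstar - LG δ := by
    rw [hG, hLGapp δ]
    rw [← Finset.sum_sub_distrib, ← Finset.sum_sub_distrib]
    refine Finset.sum_le_sum (fun i _ => ?_)
    have hδi : δ i = w i - wstar i := rfl
    rw [hδi]
    exact key_coord (wstar i) (w i)
  -- combine
  have hFsub : lam / 36 * ∑ i, (δ i) ^ 4 ≤ F w - F wstar := by
    have h3 := mul_le_mul_of_nonneg_left hkey hlam.le
    simp only [hF]
    rw [← Finset.sum_div] at h3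
    linarith [hconv, happ, h3]
  -- Cauchy-Schwarz
  have hcs : ‖δ‖ ^ 2 = ∑ i, (δ i) ^ 2 := by
    rw [PiLp.norm_sq_eq_of_L2]
    simp [Real.norm_eq_abs, sq_abs]
  have hpm : (∑ i, (δ i) ^ 2) ^ 2 ≤ (d : ℝ) * ∑ i, (δ i) ^ 4 := by
    have h := Finset.sum_mul_sq_le_sq_mul_sq Finset.univ (fun _ => (1:ℝ)) (fun i => (δ i) ^ 2)
    have he : ∀ i : Fin d, ((δ i) ^ 2) ^ 2 = (δ i) ^ 4 := fun i => by ring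
    simpa [Finset.card_univ, he] using h
  have h4 : ‖δ‖ ^ 4 ≤ (d : ℝ) * ∑ i, (δ i) ^ 4 := by
    calc ‖δ‖ ^ 4 = (‖δ‖ ^ 2) ^ 2 := by ring
    _ = (∑ i, (δ i) ^ 2) ^ 2 := by rw [hcs]
    _ ≤ _ := hpm
  have hfirst : lam / (36 * (d:ℝ)) * ‖δ‖ ^ 4 ≤ F w - F wstar := by
    have h5 : lam / (36 * (d:ℝ)) * ‖δ‖ ^ 4 ≤ lam / (36 * (d:ℝ)) * ((d:ℝ) * ∑ i, (δ i) ^ 4) :=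
      mul_le_mul_of_nonneg_left h4 (by positivity)
    have heq : lam / (36 * (d:ℝ)) * ((d:ℝ) * ∑ i, (δ i) ^ 4) = lam / 36 * ∑ i, (δ i) ^ 4 := by
      field_simp
    linarith [hFsub, h5, heq ▸ h5]
  refine ⟨hfirst, ?_⟩
  have hA : 0 ≤ F w - F wstar := le_trans (by positivity) hfirst
  have hX : ‖δ‖ ^ 4 ≤ 36 * ((d:ℝ) / lam) * (F w - F wstar) := by
    have h := mul_le_mul_of_nonneg_left hfirst
      (le_of_lt (show (0:ℝ) < 36 * ((d:ℝ) / lam) by positivity))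
    calc ‖δ‖ ^ 4 = 36 * ((d:ℝ) / lam) * (lam / (36 * (d:ℝ)) * ‖δ‖ ^ 4) := by
          field_simp
    _ ≤ _ := h
  have hrhs : (6 * Real.sqrt ((d:ℝ) / lam) * Real.sqrt (F w - F wstar)) ^ 2
      = 36 * ((d:ℝ) / lam) * (F w - F wstar) := by
    rw [mul_pow, mul_pow, Real.sq_sqrt (by positivity : (0:ℝ) ≤ (d:ℝ)/lam), Real.sq_sqrt hA]
    norm_num
  have hsq : (‖δ‖ ^ 2) ^ 2 ≤ (6 * Real.sqrt ((d:ℝ) / lam) * Real.sqrt (F w - F wstar)) ^ 2 := by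
    rw [hrhs]
    calc (‖δ‖ ^ 2) ^ 2 = ‖δ‖ ^ 4 := by ring
    _ ≤ _ := hX
  have hfin := Real.sqrt_le_sqrt hsq
  rwa [Real.sqrt_sq (by positivity), Real.sqrt_sq (by positivity)] at hfin
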